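/- Let n ≥ k ≥ 1 and M ≥ 1 be integers, λ_1,…,λ_n pairwise distinct nonzero complex numbers, and a_{ij}, b_{ij} (1 ≤ i ≤ n, 1 ≤ j ≤ k) complex numbers. Set λ_{n+i} = λ_i for 1 ≤ i ≤ n, ξ_i = ξ(x,λ_i), ξ'(x,λ) = Σ_{j=1}^M j x_j λ^{j−1}, and define f_j : ℂ^M → ℂ by f_j(x) = Σ_{i=1}^n ((a_{ij}+b_{ij}) + λ_i b_{ij} ξ'(x,λ_i)) e^{ξ(x,λ_i)}. Let A be the 2n×k matrix whose i-th row is (a_{ij}+b_{ij})_j for 1 ≤ i ≤ n and whose (n+i)-th row is (λ_i b_{ij})_j for 1 ≤ i ≤ n, and let D = D(x) be the k×2n matrix with rows indexed by p = 0,…,k−1 whose (p,i) entry is λ_i^p for 1 ≤ i ≤ n and whose (p,n+i) entry is p λ_i^{p−1} + λ_i^p ξ'(x,λ_i) for 1 ≤ i ≤ n. Then the Wronskian with respect to x_1, det((∂^{p-1}/∂x_1^{p-1}) f_j(x))_{1≤p,j≤k}, equals Σ_{1≤i_1<⋯<i_k≤2n} A_{i_1,…,i_k} D_{i_1,…,i_k}(x)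 e^{ξ_{i_1}+⋯+ξ_{i_k}}, where A_{i_1,…,i_k} is the k×k minor of A on rows i_1,…,i_k and D_{i_1,…,i_k}(x) is the k×k minor of D(x) on columns i_1,…,i_k. -/

import Mathlib

open scoped Classical

noncomputable section

/-- `ξ(x,λ) = Σ_{j=1}^M x_j λ^j` for `x ∈ ℂ^M`. -/
def xiKP (M : ℕ) (x : Fin M → ℂ) (lam : ℂ) : ℂ :=
  ∑ j : Fin M, x j * lam ^ ((j : ℕ) + 1)

/-- `ξ'(x,λ) = Σ_{j=1}^M j x_j λ^{j-1}`. -/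
def xiKP' (M : ℕ) (x : Fin M → ℂ) (lam : ℂ) : ℂ :=
  ∑ j : Fin M, ((j : ℕ) + 1 : ℂ) * x j * lam ^ (j : ℕ)

/-- The parameters `λ_1,…,λ_n,λ_1,…,λ_n` (i.e. `λ_{n+i} = λ_i`). -/
def LamExt (n : ℕ) (lam : Fin n → ℂ) : Fin (n + n) → ℂ :=
  Fin.addCases lam lam

/-- The `2n×k` matrix `A` of formula (6.2). -/
def Amat (n k : ℕ) (lam : Fin n → ℂ) (a b : Fin n → Fin k → ℂ) :
    Matrix (Fin (n + n)) (Fin k) ℂ :=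
  Matrix.of fun i j =>
    Fin.addCases (fun i' => a i' j + b i' j) (fun i' => lam i' * b i' j) i

/-- The `k×2n` matrix `D(x)` with columns `v_k(λ_i)` and `w_k(λ_i)`. -/
def Dmat (n k M : ℕ) (lam : Fin n → ℂ) (x : Fin M → ℂ) :
    Matrix (Fin k) (Fin (n + n)) ℂ :=
  Matrix.of fun p i =>
    Fin.addCases (fun i' => lam i' ^ (p : ℕ))
      (fun i' => ((p : ℕ) : ℂ) * lam i' ^ ((p : ℕ) - 1) +
        lam i' ^ (p : ℕ) * xiKP' M x (lam i')) i


open Matrix Equiv Finset in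
private lemma strictMono_eq_of_image_eqKP {k m : ℕ} {I I' : Fin k → Fin m} (hI : StrictMono I)
    (hI' : StrictMono I') (h : Finset.image I Finset.univ = Finset.image I' Finset.univ) :
    I = I' := by
  have hc : (Finset.image I Finset.univ).card = k := by
    rw [Finset.card_image_of_injective _ hI.injective, Finset.card_univ, Fintype.card_fin]
  have e1 : I = (Finset.image I Finset.univ).orderEmbOfFin hc :=
    Finset.orderEmbOfFin_unique hc (fun p => Finset.mem_image_of_mem _ (Finset.mem_univ p)) hI
  have e2 : I' = (Finset.image I Finset.univ).orderEmbOfFin hc :=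
    Finset.orderEmbOfFin_unique hc
      (fun p => h ▸ Finset.mem_image_of_mem _ (Finset.mem_univ p)) hI'
  rw [e1, e2]

open Matrix Equiv Finset in
private lemma sum_injective_eqKP {β : Type*} [AddCommMonoid β] {k m : ℕ}
    (T : (Fin k → Fin m) → β) :
    ∑ f ∈ Finset.univ.filter (fun f : Fin k → Fin m => Function.Injective f), T f
      = ∑ I ∈ Finset.univ.filter (fun I : Fin k → Fin m => StrictMono I),
          ∑ σ : Equiv.Perm (Fin k), T (I ∘ σ) := by
  rw [← Finset.sum_product']
  symm
  refine Finset.sum_bij (fun a _ => a.1 ∘ a.2) ?_ ?_ ?_ ?_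
  · rintro ⟨I, σ⟩ ha
    simp only [Finset.mem_product, Finset.mem_filter, Finset.mem_univ, true_and] at ha ⊢
    exact ha.1.injective.comp σ.injective
  · rintro ⟨I, σ⟩ ha ⟨I', σ'⟩ ha' hee
    simp only [Finset.mem_product, Finset.mem_filter, Finset.mem_univ, true_and,
      and_true] at ha ha'
    have hee' : I ∘ σ = I' ∘ σ' := hee
    have him : Finset.image I Finset.univ = Finset.image I' Finset.univ := by
      have h2 : Finset.image (I ∘ σ) Finset.univ = Finset.image (I' ∘ σ') Finset.univ := by
        rw [hee']
      rwa [← Finset.image_image, ← Finset.image_image (g := I'),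
        Finset.image_univ_equiv, Finset.image_univ_equiv] at h2
    have hI : I = I' := strictMono_eq_of_image_eqKP ha ha' him
    subst hI
    have hσ : σ = σ' := Equiv.ext fun p => ha.injective (congrFun hee' p)
    simp [hσ]
  · intro f hf
    simp only [Finset.mem_filter, Finset.mem_univ, true_and] at hf
    set s := Finset.image f Finset.univ with hs
    have hc : s.card = k := by
      rw [hs, Finset.card_image_of_injective _ hf, Finset.card_univ, Fintype.card_fin]
    have hmem : ∀ p, f p ∈ s := fun p => Finset.mem_image_of_mem _ (Finset.mem_univ p)
    have hσinj : Function.Injective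
        (fun p => (s.orderIsoOfFin hc).symm ⟨f p, hmem p⟩ : Fin k → Fin k) := by
      intro p q hpq
      have h2 := (s.orderIsoOfFin hc).symm.injective hpq
      exact hf (congrArg Subtype.val h2)
    have hσbij := Finite.injective_iff_bijective.mp hσinj
    refine ⟨⟨s.orderEmbOfFin hc, Equiv.ofBijective _ hσbij⟩, ?_, ?_⟩
    · refine Finset.mem_product.mpr ⟨?_, Finset.mem_univ _⟩
      simpa using (s.orderEmbOfFin hc).strictMono
    · ext p
      simp only [Function.comp_apply, Equiv.ofBijective_apply]
      rw [← Finset.coe_orderIsoOfFin_apply, OrderIso.apply_symm_apply]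
  · rintro ⟨I, σ⟩ ha
    rfl

open Matrix Equiv Finset in
private lemma det_submatrix_eq_sum_permKP {R : Type*} [CommRing R] {k m : ℕ}
    (M : Matrix (Fin k) (Fin m) R) (I : Fin k → Fin m) :
    (M.submatrix id I).det
      = ∑ σ : Equiv.Perm (Fin k), ((Equiv.Perm.sign σ : ℤ) : R) * ∏ p, M p (I (σ p)) := by
  rw [Matrix.det_apply']
  rw [← Equiv.sum_comp (Equiv.inv (Equiv.Perm (Fin k)))]
  refine Finset.sum_congr rfl fun σ _ => ?_
  simp only [Equiv.inv_apply, Equiv.Perm.sign_inv]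
  congr 1
  have h3 := Equiv.prod_comp σ (fun q => M (σ⁻¹ q) (I q))
  simp only [Equiv.Perm.inv_def, Equiv.symm_apply_apply] at h3
  simp only [Matrix.submatrix_apply, id]
  exact h3.symm

open Matrix Equiv Finset in
private theorem cauchyBinetKP {R : Type*} [CommRing R] {k m : ℕ}
    (M : Matrix (Fin k) (Fin m) R) (N : Matrix (Fin m) (Fin k) R) :
    (M * N).det = ∑ I : Fin k → Fin m, if StrictMono I then
      (M.submatrix id I).det * (N.submatrix I id).det else 0 := by
  have h1 : (M * N).det = ∑ f : Fin k → Fin m,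
      (∏ p, M p (f p)) * (N.submatrix f id).det := by
    have e1 : (M * N).det = (detRowAlternating : (Fin k → R) [⋀^Fin k]→ₗ[R] R)
        (fun p => ∑ i : Fin m, M p i • N i) := by
      congr 1
      ext p j
      simp [Matrix.mul_apply, Finset.sum_apply]
    have e2 := (detRowAlternating : (Fin k → R) [⋀^Fin k]→ₗ[R] R).toMultilinearMap.map_sum
      (α := fun _ : Fin k => Fin m) (g := fun p i => M p i • N i)
    rw [e1]
    rw [show ((detRowAlternating : (Fin k → R) [⋀^Fin k]→ₗ[R] R)
        (fun p => ∑ i : Fin m, M p i • N i)) =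
      ((detRowAlternating : (Fin k → R) [⋀^Fin k]→ₗ[R] R).toMultilinearMap
        (fun p => ∑ i : Fin m, (fun p i => M p i • N i) p i)) from rfl, e2]
    refine Finset.sum_congr rfl fun f _ => ?_
    rw [show ((detRowAlternating : (Fin k → R) [⋀^Fin k]→ₗ[R] R).toMultilinearMap
        (fun p => M p (f p) • N (f p))) =
      ((detRowAlternating : (Fin k → R) [⋀^Fin k]→ₗ[R] R).toMultilinearMap
        (fun p => M p (f p) • (fun p => N (f p)) p)) from rfl]
    rw [MultilinearMap.map_smul_univ]
    rfl
  rw [h1]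
  rw [← Finset.sum_filter_of_ne (p := fun f : Fin k → Fin m => Function.Injective f)
    (by
      intro f _ hTf
      by_contra hfi
      apply hTf
      obtain ⟨p, q, hpq, hne⟩ : ∃ p q, f p = f q ∧ p ≠ q := by
        simp only [Function.Injective, not_forall] at hfi
        obtain ⟨p, q, h1, h2⟩ := hfi
        exact ⟨p, q, h1, h2⟩
      have : (N.submatrix f id).det = 0 :=
        Matrix.det_zero_of_row_eq hne (by ext j; simp [hpq])
      rw [this, mul_zero])]
  rw [sum_injective_eqKP]
  rw [Finset.sum_filter]
  refine Finset.sum_congr rfl fun I _ => ?_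
  by_cases hI : StrictMono I
  · simp only [hI, if_true]
    have key : ∀ σ : Equiv.Perm (Fin k),
        (∏ p, M p ((I ∘ σ) p)) * ((N.submatrix (I ∘ σ) id).det)
          = (((Equiv.Perm.sign σ : ℤ) : R) * ∏ p, M p (I (σ p))) * (N.submatrix I id).det := by
      intro σ
      have hsub : N.submatrix (I ∘ σ) id = (N.submatrix I id).submatrix σ id := rfl
      rw [hsub, Matrix.det_permute]
      simp only [Function.comp_apply]
      ring
    rw [Finset.sum_congr rfl (fun σ _ => key σ), ← Finset.sum_mul,
      ← det_submatrix_eq_sum_permKP]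
  · simp only [hI, if_false]

private lemma hasDerivAt_termKP (α β γ δ : ℂ) (p : ℕ) (t : ℂ) :
    HasDerivAt (fun t => (γ^p*(α+β*t)+(p:ℂ)*γ^(p-1)*β) * Complex.exp (γ*t+δ))
      ((γ^(p+1)*(α+β*t)+((p:ℂ)+1)*γ^p*β) * Complex.exp (γ*t+δ)) t := by
  have hpoly : HasDerivAt (fun t : ℂ => γ^p*(α+β*t)+(p:ℂ)*γ^(p-1)*β) (γ^p*β) t := by
    have h1 := (((hasDerivAt_id t).const_mul β).const_add α).const_mul (γ^p)
    have h2 := h1.add_const ((p:ℂ)*γ^(p-1)*β)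
    simpa [mul_comm] using h2
  have hexp : HasDerivAt (fun t : ℂ => Complex.exp (γ*t+δ)) (Complex.exp (γ*t+δ) * γ) t := by
    have h1 := ((hasDerivAt_id t).const_mul γ).add_const δ
    simpa using h1.cexp
  have h := hpoly.mul hexp
  refine h.congr_deriv ?_
  have hγ : (p:ℂ) * γ^(p-1) * γ = (p:ℂ) * γ^p := by
    cases p with
    | zero => simp
    | succ q => rw [Nat.add_sub_cancel, mul_assoc, ← pow_succ]
  linear_combination (Complex.exp (γ*t+δ) * β) * hγ

private lemma iter_deriv_sum_lin_expKP {ι : Type*} (s : Finset ι) (α β γ δ : ι → ℂ) (p : ℕ) :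
    iteratedDeriv p (fun t => ∑ i ∈ s, (α i + β i * t) * Complex.exp (γ i * t + δ i))
      = fun t => ∑ i ∈ s,
          (γ i ^ p * (α i + β i * t) + (p:ℂ) * γ i ^ (p-1) * β i) *
            Complex.exp (γ i * t + δ i) := by
  induction p with
  | zero => simp
  | succ q ih =>
    rw [iteratedDeriv_succ, ih]
    funext t
    have h := HasDerivAt.fun_sum
      (fun i (_ : i ∈ s) => hasDerivAt_termKP (α i) (β i) (γ i) (δ i) q t)
    rw [h.deriv]
    refine Finset.sum_congr rfl fun i _ => ?_
    push_cast
    ring_nf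

private lemma xiKP_update {M : ℕ} (hM : 1 ≤ M) (x : Fin M → ℂ) (t lam : ℂ) :
    xiKP M (Function.update x ⟨0, hM⟩ t) lam
      = lam * t + (xiKP M x lam - lam * x ⟨0, hM⟩) := by
  unfold xiKP
  have key : ∀ j : Fin M, Function.update x ⟨0, hM⟩ t j * lam ^ ((j : ℕ) + 1)
      = x j * lam ^ ((j : ℕ) + 1)
        + (if j = ⟨0, hM⟩ then (t - x ⟨0, hM⟩) * lam else 0) := by
    intro j
    rcases eq_or_ne j ⟨0, hM⟩ with h | h
    · subst h
      simp [Function.update_self]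
      try ring
    · simp [Function.update_of_ne h, h]
  rw [Finset.sum_congr rfl fun j _ => key j, Finset.sum_add_distrib,
    Finset.sum_ite_eq' Finset.univ (⟨0, hM⟩ : Fin M)]
  simp
  ring

private lemma xiKP'_update {M : ℕ} (hM : 1 ≤ M) (x : Fin M → ℂ) (t lam : ℂ) :
    xiKP' M (Function.update x ⟨0, hM⟩ t) lam
      = t + (xiKP' M x lam - x ⟨0, hM⟩) := by
  unfold xiKP'
  have key : ∀ j : Fin M, ((j : ℕ) + 1 : ℂ) * Function.update x ⟨0, hM⟩ t j * lam ^ (j : ℕ)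
      = ((j : ℕ) + 1 : ℂ) * x j * lam ^ (j : ℕ)
        + (if j = ⟨0, hM⟩ then t - x ⟨0, hM⟩ else 0) := by
    intro j
    rcases eq_or_ne j ⟨0, hM⟩ with h | h
    · subst h
      simp [Function.update_self]
      try ring
    · simp [Function.update_of_ne h, h]
  rw [Finset.sum_congr rfl fun j _ => key j, Finset.sum_add_distrib,
    Finset.sum_ite_eq' Finset.univ (⟨0, hM⟩ : Fin M)]
  simp
  ring

/-- formula (6.3): the Wronskian expansion of the `(2n,k)`
generalized soliton tau function. -/
theorem GS_2n_k_wronskian_expansion (n k M : ℕ) (hk : 1 ≤ k) (hkn : k ≤ n) (hM : 1 ≤ M)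
    (lam : Fin n → ℂ) (hne : ∀ i, lam i ≠ 0) (hinj : Function.Injective lam)
    (a b : Fin n → Fin k → ℂ) (x : Fin M → ℂ) :
    Matrix.det (Matrix.of fun p j : Fin k =>
        iteratedDeriv (p : ℕ)
          (fun t => ∑ i,
            ((a i j + b i j) +
                lam i * b i j * xiKP' M (Function.update x ⟨0, hM⟩ t) (lam i)) *
              Complex.exp (xiKP M (Function.update x ⟨0, hM⟩ t) (lam i)))
          (x ⟨0, hM⟩)) =
      ∑ I : Fin k → Fin (n + n),
        if StrictMono I then
          Matrix.det (Matrix.of fun p q : Fin k => Amat n k lam a b (I p) q) *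
            Matrix.det (Matrix.of fun p q : Fin k => Dmat n k M lam x p (I q)) *
            Complex.exp (∑ p : Fin k, xiKP M x (LamExt n lam (I p)))
        else 0 := by
  classical
  set NM : Matrix (Fin (n + n)) (Fin k) ℂ :=
    Matrix.of (fun i q => Complex.exp (xiKP M x (LamExt n lam i)) * Amat n k lam a b i q)
    with hNM
  have hW : (Matrix.of fun p j : Fin k =>
      iteratedDeriv (p : ℕ)
        (fun t => ∑ i,
          ((a i j + b i j) +
              lam i * b i j * xiKP' M (Function.update x ⟨0, hM⟩ t) (lam i)) *
            Complex.exp (xiKP M (Function.update x ⟨0, hM⟩ t) (lam i)))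
        (x ⟨0, hM⟩)) = Dmat n k M lam x * NM := by
    ext p j
    have hfun : (fun t => ∑ i,
          ((a i j + b i j) +
              lam i * b i j * xiKP' M (Function.update x ⟨0, hM⟩ t) (lam i)) *
            Complex.exp (xiKP M (Function.update x ⟨0, hM⟩ t) (lam i)))
        = fun t => ∑ i : Fin n,
            ((((a i j + b i j) + lam i * b i j * (xiKP' M x (lam i) - x ⟨0, hM⟩)))
                + (lam i * b i j) * t) *
              Complex.exp ((lam i) * t + (xiKP M x (lam i) - lam i * x ⟨0, hM⟩)) := by
      funext t
      refine Finset.sum_congr rfl fun i _ => ?_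
      rw [xiKP_update hM, xiKP'_update hM]
      ring_nf
    simp only [Matrix.of_apply]
    rw [hfun, iter_deriv_sum_lin_expKP, Matrix.mul_apply]
    rw [Fin.sum_univ_add]
    simp only [hNM, Dmat, Amat, LamExt, Matrix.of_apply, Fin.addCases_left, Fin.addCases_right]
    rw [← Finset.sum_add_distrib]
    refine Finset.sum_congr rfl fun i _ => ?_
    rw [show lam i * x ⟨0, hM⟩ + (xiKP M x (lam i) - lam i * x ⟨0, hM⟩)
      = xiKP M x (lam i) from by ring]
    ring
  rw [hW, cauchyBinetKP]
  refine Finset.sum_congr rfl fun I _ => ?_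
  by_cases hI : StrictMono I
  · simp only [hI, if_true]
    have h1 : (NM.submatrix I id).det
        = Complex.exp (∑ p : Fin k, xiKP M x (LamExt n lam (I p))) *
            (Matrix.of fun p q : Fin k => Amat n k lam a b (I p) q).det := by
      have h2 := Matrix.det_mul_column (fun p => Complex.exp (xiKP M x (LamExt n lam (I p))))
        (Matrix.of fun p q : Fin k => Amat n k lam a b (I p) q)
      rw [Finset.prod_congr rfl (fun p _ => rfl), ← Complex.exp_sum] at h2
      exact h2
    rw [show ((Dmat n k M lam x).submatrix id I)
        = (Matrix.of fun p q : Fin k => Dmat n k M lam x p (I q)) from rfl, h1]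
    ring
  · simp only [hI, if_false]


end
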